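/- Let $b_t(Z,X)=\tilde Z^{\top}(d-\tau)+\sum_{j=1}^p(g_j-\eta_j)(X_j)$ and suppose $\mathbb{E}\,Z_m^4\|Z\|^2<\infty$. Then $\mathbb{E}\big[|Z_m|\,b_t^2(Z,X)\big]\le 2^{1/4}\big\{\max\big(\mathbb{E}Z_m^4\|\tilde Z\|^2,\,p^2\,\mathbb{E}Z_m^4\big)\big\}^{1/4}\big\{\|d-\tau\|^2+\max_{1\le j\le p}\|g_j-\eta_j\|_\infty^2\big\}^{1/4}\,\pi_{\mathbb{P}}^{3/2}(t,\theta)$, where $\pi_{\mathbb{P}}^2(t,\theta)=\mathbb{E}\,b_t^2(Z,X)$. -/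

import Mathlib

open MeasureTheory
open scoped RealInnerProductSpace

/-- Cauchy–Schwarz for integrals of nonnegative functions. -/
lemma myCS {Ω : Type*} [MeasurableSpace Ω] (μ : Measure Ω) {f g : Ω → ℝ}
    (hf : 0 ≤ f) (hg : 0 ≤ g) (hfm : AEStronglyMeasurable f μ)
    (hgm : AEStronglyMeasurable g μ)
    (hf2 : Integrable (fun ω => f ω ^ 2) μ) (hg2 : Integrable (fun ω => g ω ^ 2) μ) :
    ∫ ω, f ω * g ω ∂μ ≤ (∫ ω, f ω ^ 2 ∂μ) ^ ((1:ℝ)/2) * (∫ ω, g ω ^ 2 ∂μ) ^ ((1:ℝ)/2) := by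
  have hpq : Real.HolderConjugate 2 2 := Real.HolderConjugate.two_two
  have h2 : ENNReal.ofReal (2:ℝ) = 2 := by norm_num [ENNReal.ofReal_ofNat]
  have hmf : MemLp f (ENNReal.ofReal (2:ℝ)) μ := by
    rw [h2]; exact (memLp_two_iff_integrable_sq hfm).2 hf2
  have hmg : MemLp g (ENNReal.ofReal (2:ℝ)) μ := by
    rw [h2]; exact (memLp_two_iff_integrable_sq hgm).2 hg2
  have := integral_mul_le_Lp_mul_Lq_of_nonneg hpq
    (Filter.Eventually.of_forall hf) (Filter.Eventually.of_forall hg) hmf hmg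
  have hr : ∀ x : ℝ, x ^ (2:ℝ) = x ^ 2 := fun x => by
    rw [show (2:ℝ) = ((2:ℕ):ℝ) by norm_num, Real.rpow_natCast]
  simpa [hr] using this

set_option maxHeartbeats 1000000 in
theorem stmt14 {Ω : Type*} [MeasurableSpace Ω] (μ : Measure Ω) [IsProbabilityMeasure μ]
    {q p : ℕ} (Z : Ω → EuclideanSpace ℝ (Fin q)) (X : Ω → Fin p → ℝ)
    (hZ : Measurable Z) (hX : Measurable X) (m : Fin q)
    (d0 τ0 : ℝ) (dv τv : EuclideanSpace ℝ (Fin q)) (g η : Fin p → ℝ → ℝ)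
    (hgm : ∀ j, Measurable (g j)) (hηm : ∀ j, Measurable (η j))
    (G : ℝ) (hG0 : 0 ≤ G) (hGb : ∀ j x, |g j x - η j x| ≤ G)
    (b : Ω → ℝ)
    (hbdef : ∀ ω, b ω = (d0 - τ0) + ⟪dv - τv, Z ω⟫
      + ∑ j, (g j (X ω j) - η j (X ω j)))
    (hmom : Integrable (fun ω => (Z ω m) ^ 4 * (1 + ‖Z ω‖ ^ 2)) μ)
    (hmom4 : Integrable (fun ω => (Z ω m) ^ 4) μ)
    (hb2 : Integrable (fun ω => (b ω) ^ 2) μ)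
    (hZb2 : Integrable (fun ω => |Z ω m| * (b ω) ^ 2) μ) :
    ∫ ω, |Z ω m| * (b ω) ^ 2 ∂μ
      ≤ (2 : ℝ) ^ ((1:ℝ)/4)
        * (max (∫ ω, (Z ω m) ^ 4 * (1 + ‖Z ω‖ ^ 2) ∂μ)
            ((p : ℝ) ^ 2 * ∫ ω, (Z ω m) ^ 4 ∂μ)) ^ ((1:ℝ)/4)
        * (((d0 - τ0) ^ 2 + ‖dv - τv‖ ^ 2) + G ^ 2) ^ ((1:ℝ)/4)
        * (∫ ω, (b ω) ^ 2 ∂μ) ^ ((3:ℝ)/4) := by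
  set c : ℝ := d0 - τ0 with hc
  set v : EuclideanSpace ℝ (Fin q) := dv - τv with hv
  -- measurability
  have hZm : Measurable fun ω => Z ω m := (measurable_pi_apply m).comp ((WithLp.measurable_ofLp 2 _).comp hZ)
  have hbm : Measurable b := by
    have hb' : b = fun ω => c + ⟪v, Z ω⟫ + ∑ j, (g j (X ω j) - η j (X ω j)) :=
      funext hbdef
    rw [hb']
    refine ((measurable_const.add (measurable_const.inner hZ)).add ?_)
    exact Finset.measurable_sum _ fun j _ =>
      ((hgm j).comp ((measurable_pi_apply j).comp hX)).sub
        ((hηm j).comp ((measurable_pi_apply j).comp hX))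
  -- pointwise bound on b²
  have hbpt : ∀ ω, (b ω) ^ 2 ≤ 2 * ((c ^ 2 + ‖v‖ ^ 2) * (1 + ‖Z ω‖ ^ 2)
      + (p:ℝ) ^ 2 * G ^ 2) := by
    intro ω
    set u : ℝ := ⟪v, Z ω⟫ with hu
    set w : ℝ := ∑ j, (g j (X ω j) - η j (X ω j)) with hw
    have hub : |u| ≤ ‖v‖ * ‖Z ω‖ := abs_real_inner_le_norm v (Z ω)
    have hwb : |w| ≤ (p:ℝ) * G := by
      calc |w| ≤ ∑ j, |g j (X ω j) - η j (X ω j)| := Finset.abs_sum_le_sum_abs _ _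
        _ ≤ ∑ _j : Fin p, G := Finset.sum_le_sum fun j _ => hGb j (X ω j)
        _ = (p:ℝ) * G := by simp [mul_comm]
    have hb : b ω = c + u + w := hbdef ω
    have h1 : (c + u) ^ 2 ≤ (c ^ 2 + ‖v‖ ^ 2) * (1 + ‖Z ω‖ ^ 2) := by
      have hcu : c * u ≤ |c| * (‖v‖ * ‖Z ω‖) := by
        calc c * u ≤ |c * u| := le_abs_self _
          _ = |c| * |u| := abs_mul _ _
          _ ≤ |c| * (‖v‖ * ‖Z ω‖) := by
            exact mul_le_mul_of_nonneg_left hub (abs_nonneg c)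
      have hu2 : u ^ 2 ≤ ‖v‖ ^ 2 * ‖Z ω‖ ^ 2 := by
        nlinarith [hub, abs_nonneg u, sq_abs u, norm_nonneg v, norm_nonneg (Z ω)]
      nlinarith [sq_nonneg (|c| * ‖Z ω‖ - ‖v‖), sq_abs c]
    have h2 : w ^ 2 ≤ (p:ℝ) ^ 2 * G ^ 2 := by
      nlinarith [hwb, abs_nonneg w, sq_abs w, Nat.cast_nonneg (α := ℝ) p]
    rw [hb]
    nlinarith [sq_nonneg (c + u - w), h1, h2]
  -- pointwise bound on Z_m⁴ b²
  have hpt : ∀ ω, (Z ω m) ^ 4 * (b ω) ^ 2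
      ≤ 2 * ((c ^ 2 + ‖v‖ ^ 2) * ((Z ω m) ^ 4 * (1 + ‖Z ω‖ ^ 2))
        + G ^ 2 * ((p:ℝ) ^ 2 * (Z ω m) ^ 4)) := by
    intro ω
    have h4 : (0:ℝ) ≤ (Z ω m) ^ 4 := by positivity
    nlinarith [mul_le_mul_of_nonneg_left (hbpt ω) h4]
  -- integrability of Z_m⁴ b²
  have hI46int : Integrable (fun ω => 2 * ((c ^ 2 + ‖v‖ ^ 2) * ((Z ω m) ^ 4 * (1 + ‖Z ω‖ ^ 2))
      + G ^ 2 * ((p:ℝ) ^ 2 * (Z ω m) ^ 4))) μ :=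
    (((hmom.const_mul (c ^ 2 + ‖v‖ ^ 2)).add
      ((hmom4.const_mul ((p:ℝ) ^ 2)).const_mul (G ^ 2))).const_mul 2)
  have hI46 : Integrable (fun ω => (Z ω m) ^ 4 * (b ω) ^ 2) μ := by
    refine Integrable.mono' hI46int ((hZm.pow_const 4).mul (hbm.pow_const 2)).aestronglyMeasurable
      (Filter.Eventually.of_forall fun ω => ?_)
    rw [Real.norm_eq_abs, abs_of_nonneg (by positivity)]
    exact hpt ω
  have hI26 : Integrable (fun ω => (Z ω m) ^ 2 * (b ω) ^ 2) μ := by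
    refine Integrable.mono' (hb2.add hI46)
      ((hZm.pow_const 2).mul (hbm.pow_const 2)).aestronglyMeasurable
      (Filter.Eventually.of_forall fun ω => ?_)
    simp only [Pi.add_apply]
    rw [Real.norm_eq_abs, abs_of_nonneg (by positivity)]
    nlinarith [sq_nonneg ((Z ω m) ^ 2 - 1), sq_nonneg (b ω)]
  -- notation for integrals
  set J : ℝ := ∫ ω, (Z ω m) ^ 4 * (b ω) ^ 2 ∂μ with hJ
  set I2 : ℝ := ∫ ω, (Z ω m) ^ 2 * (b ω) ^ 2 ∂μ with hI2
  set Eb : ℝ := ∫ ω, (b ω) ^ 2 ∂μ with hEb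
  set M : ℝ := max (∫ ω, (Z ω m) ^ 4 * (1 + ‖Z ω‖ ^ 2) ∂μ)
      ((p:ℝ) ^ 2 * ∫ ω, (Z ω m) ^ 4 ∂μ) with hM
  set S : ℝ := (c ^ 2 + ‖v‖ ^ 2) + G ^ 2 with hS
  have hEb0 : 0 ≤ Eb := integral_nonneg fun ω => by positivity
  have hJ0 : 0 ≤ J := integral_nonneg fun ω => by positivity
  have hI20 : 0 ≤ I2 := integral_nonneg fun ω => by positivity
  have hM0 : 0 ≤ M := le_trans (integral_nonneg fun ω => by positivity) (le_max_left _ _)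
  have hS0 : 0 ≤ S := by positivity
  -- step B : J ≤ 2 * S * M
  have hJle : J ≤ 2 * S * M := by
    have h1 : J ≤ ∫ ω, 2 * ((c ^ 2 + ‖v‖ ^ 2) * ((Z ω m) ^ 4 * (1 + ‖Z ω‖ ^ 2))
        + G ^ 2 * ((p:ℝ) ^ 2 * (Z ω m) ^ 4)) ∂μ :=
      integral_mono hI46 hI46int hpt
    have h2 : ∫ ω, 2 * ((c ^ 2 + ‖v‖ ^ 2) * ((Z ω m) ^ 4 * (1 + ‖Z ω‖ ^ 2))
        + G ^ 2 * ((p:ℝ) ^ 2 * (Z ω m) ^ 4)) ∂μ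
        = 2 * ((c ^ 2 + ‖v‖ ^ 2) * (∫ ω, (Z ω m) ^ 4 * (1 + ‖Z ω‖ ^ 2) ∂μ)
          + G ^ 2 * ((p:ℝ) ^ 2 * ∫ ω, (Z ω m) ^ 4 ∂μ)) := by
      rw [integral_const_mul, integral_add (hmom.const_mul _)
        ((hmom4.const_mul _).const_mul _), integral_const_mul, integral_const_mul,
        integral_const_mul]
    have h3 : (c ^ 2 + ‖v‖ ^ 2) * (∫ ω, (Z ω m) ^ 4 * (1 + ‖Z ω‖ ^ 2) ∂μ)
        + G ^ 2 * ((p:ℝ) ^ 2 * ∫ ω, (Z ω m) ^ 4 ∂μ) ≤ S * M := by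
      have ha : (∫ ω, (Z ω m) ^ 4 * (1 + ‖Z ω‖ ^ 2) ∂μ) ≤ M := le_max_left _ _
      have hb' : ((p:ℝ) ^ 2 * ∫ ω, (Z ω m) ^ 4 ∂μ) ≤ M := le_max_right _ _
      have hcv : (0:ℝ) ≤ c ^ 2 + ‖v‖ ^ 2 := by positivity
      have hG2 : (0:ℝ) ≤ G ^ 2 := by positivity
      calc (c ^ 2 + ‖v‖ ^ 2) * (∫ ω, (Z ω m) ^ 4 * (1 + ‖Z ω‖ ^ 2) ∂μ)
            + G ^ 2 * ((p:ℝ) ^ 2 * ∫ ω, (Z ω m) ^ 4 ∂μ)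
          ≤ (c ^ 2 + ‖v‖ ^ 2) * M + G ^ 2 * M :=
            add_le_add (mul_le_mul_of_nonneg_left ha hcv)
              (mul_le_mul_of_nonneg_left hb' hG2)
        _ = S * M := by rw [hS]; ring
    calc J ≤ _ := h1
      _ = _ := h2
      _ ≤ 2 * (S * M) := by linarith
      _ = 2 * S * M := by ring
  -- Cauchy–Schwarz step 1
  have hCS1 : ∫ ω, |Z ω m| * (b ω) ^ 2 ∂μ ≤ I2 ^ ((1:ℝ)/2) * Eb ^ ((1:ℝ)/2) := by
    have := myCS μ (f := fun ω => |Z ω m| * |b ω|) (g := fun ω => |b ω|)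
      (fun ω => by positivity) (fun ω => abs_nonneg _)
      ((hZm.abs.mul hbm.abs).aestronglyMeasurable) (hbm.abs.aestronglyMeasurable)
      (by simpa [mul_pow, sq_abs] using hI26) (by simpa [sq_abs] using hb2)
    calc ∫ ω, |Z ω m| * (b ω) ^ 2 ∂μ
        = ∫ ω, (|Z ω m| * |b ω|) * |b ω| ∂μ := by
          refine integral_congr_ae (Filter.Eventually.of_forall fun ω => ?_)
          show |Z ω m| * (b ω) ^ 2 = (|Z ω m| * |b ω|) * |b ω|
          rw [mul_assoc, ← pow_two, sq_abs]
      _ ≤ _ := this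
      _ = I2 ^ ((1:ℝ)/2) * Eb ^ ((1:ℝ)/2) := by
          congr 2
          · refine integral_congr_ae (Filter.Eventually.of_forall fun ω => ?_)
            simp [mul_pow, sq_abs]
          · refine integral_congr_ae (Filter.Eventually.of_forall fun ω => ?_)
            simp [sq_abs]
  -- Cauchy–Schwarz step 2
  have hCS2 : I2 ≤ J ^ ((1:ℝ)/2) * Eb ^ ((1:ℝ)/2) := by
    have := myCS μ (f := fun ω => (Z ω m) ^ 2 * |b ω|) (g := fun ω => |b ω|)
      (fun ω => by positivity) (fun ω => abs_nonneg _)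
      (((hZm.pow_const 2).mul hbm.abs).aestronglyMeasurable) (hbm.abs.aestronglyMeasurable)
      (by simpa [mul_pow, sq_abs, ← pow_mul] using hI46) (by simpa [sq_abs] using hb2)
    calc I2 = ∫ ω, ((Z ω m) ^ 2 * |b ω|) * |b ω| ∂μ := by
          refine integral_congr_ae (Filter.Eventually.of_forall fun ω => ?_)
          show (Z ω m) ^ 2 * (b ω) ^ 2 = ((Z ω m) ^ 2 * |b ω|) * |b ω|
          rw [mul_assoc, ← pow_two, sq_abs]
      _ ≤ _ := this
      _ = J ^ ((1:ℝ)/2) * Eb ^ ((1:ℝ)/2) := by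
          congr 2
          · refine integral_congr_ae (Filter.Eventually.of_forall fun ω => ?_)
            simp [mul_pow, sq_abs, ← pow_mul]
          · refine integral_congr_ae (Filter.Eventually.of_forall fun ω => ?_)
            simp [sq_abs]
  -- combine
  have step : ∫ ω, |Z ω m| * (b ω) ^ 2 ∂μ ≤ J ^ ((1:ℝ)/4) * Eb ^ ((3:ℝ)/4) := by
    have h1 : I2 ^ ((1:ℝ)/2) ≤ (J ^ ((1:ℝ)/2) * Eb ^ ((1:ℝ)/2)) ^ ((1:ℝ)/2) :=
      Real.rpow_le_rpow hI20 hCS2 (by norm_num)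
    have h2 : (J ^ ((1:ℝ)/2) * Eb ^ ((1:ℝ)/2)) ^ ((1:ℝ)/2)
        = J ^ ((1:ℝ)/4) * Eb ^ ((1:ℝ)/4) := by
      rw [Real.mul_rpow (Real.rpow_nonneg hJ0 _) (Real.rpow_nonneg hEb0 _),
        ← Real.rpow_mul hJ0, ← Real.rpow_mul hEb0]
      norm_num
    have h3 : Eb ^ ((1:ℝ)/4) * Eb ^ ((1:ℝ)/2) = Eb ^ ((3:ℝ)/4) := by
      rw [← Real.rpow_add_of_nonneg hEb0 (by norm_num) (by norm_num)]
      norm_num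
    calc ∫ ω, |Z ω m| * (b ω) ^ 2 ∂μ
        ≤ I2 ^ ((1:ℝ)/2) * Eb ^ ((1:ℝ)/2) := hCS1
      _ ≤ (J ^ ((1:ℝ)/4) * Eb ^ ((1:ℝ)/4)) * Eb ^ ((1:ℝ)/2) := by
          rw [← h2]
          exact mul_le_mul_of_nonneg_right h1 (Real.rpow_nonneg hEb0 _)
      _ = J ^ ((1:ℝ)/4) * Eb ^ ((3:ℝ)/4) := by rw [mul_assoc, h3]
  have hJ4 : J ^ ((1:ℝ)/4) ≤ (2:ℝ) ^ ((1:ℝ)/4) * M ^ ((1:ℝ)/4) * S ^ ((1:ℝ)/4) := by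
    have := Real.rpow_le_rpow hJ0 hJle (le_of_lt (by norm_num : (0:ℝ) < 1/4))
    calc J ^ ((1:ℝ)/4) ≤ (2 * S * M) ^ ((1:ℝ)/4) := this
      _ = (2:ℝ) ^ ((1:ℝ)/4) * M ^ ((1:ℝ)/4) * S ^ ((1:ℝ)/4) := by
          rw [Real.mul_rpow (by positivity) hM0, Real.mul_rpow (by norm_num) hS0]
          ring
  calc ∫ ω, |Z ω m| * (b ω) ^ 2 ∂μ
      ≤ J ^ ((1:ℝ)/4) * Eb ^ ((3:ℝ)/4) := step
    _ ≤ ((2:ℝ) ^ ((1:ℝ)/4) * M ^ ((1:ℝ)/4) * S ^ ((1:ℝ)/4)) * Eb ^ ((3:ℝ)/4) :=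
        mul_le_mul_of_nonneg_right hJ4 (Real.rpow_nonneg hEb0 _)
    _ = (2:ℝ) ^ ((1:ℝ)/4) * M ^ ((1:ℝ)/4) * S ^ ((1:ℝ)/4) * Eb ^ ((3:ℝ)/4) := rfl
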